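/- Define α : [0,∞) → ℝ by α(t) = ∫₀^{2π} (1 + t cos θ)(1 + 2t cos θ + t²)^{(p−1)/2} dθ for fixed p > 1. Then α is continuous, α(0) = 2π, lim_{t→∞} α(t)/t^{p−1} = π(p+1), and consequently there exists C > 0 such that α(t) ≤ C(1 + t^{p−1}) for all t ≥ 0. -/

import Mathlib

open Real Filter MeasureTheory intervalIntegral Metric Topology


lemma base_nonneg (s θ : ℝ) : 0 ≤ 1 + 2 * s * Real.cos θ + s ^ 2 := by
  nlinarith [Real.sin_sq_add_cos_sq θ, sq_nonneg (s + Real.cos θ)]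

lemma cont_pow (s q : ℝ) (hq : 0 ≤ q) :
    Continuous fun θ : ℝ => (1 + 2 * s * Real.cos θ + s ^ 2) ^ q :=
  (by fun_prop : Continuous fun θ : ℝ => 1 + 2 * s * Real.cos θ + s ^ 2).rpow_const
    fun _ => Or.inr hq

lemma G_cont (q : ℝ) (hq : 0 ≤ q) :
    Continuous fun s : ℝ => ∫ θ in (0:ℝ)..(2*π), (1 + 2 * s * Real.cos θ + s ^ 2) ^ q := by
  apply intervalIntegral.continuous_parametric_intervalIntegral_of_continuous'
    (f := fun s θ => (1 + 2 * s * Real.cos θ + s ^ 2) ^ q)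
  exact (by fun_prop : Continuous fun x : ℝ × ℝ => 1 + 2 * x.1 * Real.cos x.2 + x.1 ^ 2).rpow_const
    fun _ => Or.inr hq

lemma alpha_cont (q : ℝ) (hq : 0 ≤ q) :
    Continuous fun t : ℝ => ∫ θ in (0:ℝ)..(2*π),
      (1 + t * Real.cos θ) * (1 + 2 * t * Real.cos θ + t ^ 2) ^ q := by
  apply intervalIntegral.continuous_parametric_intervalIntegral_of_continuous'
    (f := fun t θ => (1 + t * Real.cos θ) * (1 + 2 * t * Real.cos θ + t ^ 2) ^ q)
  apply Continuous.mul
  · fun_prop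
  · exact (by fun_prop : Continuous fun x : ℝ × ℝ => 1 + 2 * x.1 * Real.cos x.2 + x.1 ^ 2).rpow_const
      fun _ => Or.inr hq

lemma F_cont (q : ℝ) (hq : 0 ≤ q) :
    Continuous fun s : ℝ => ∫ θ in (0:ℝ)..(2*π),
      Real.cos θ * (1 + 2 * s * Real.cos θ + s ^ 2) ^ q := by
  apply intervalIntegral.continuous_parametric_intervalIntegral_of_continuous'
    (f := fun s θ => Real.cos θ * (1 + 2 * s * Real.cos θ + s ^ 2) ^ q)
  apply Continuous.mul
  · fun_prop
  · exact (by fun_prop : Continuous fun x : ℝ × ℝ => 1 + 2 * x.1 * Real.cos x.2 + x.1 ^ 2).rpow_const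
      fun _ => Or.inr hq


lemma base_lb (s θ : ℝ) (hs : |s| < 1/2) : (1:ℝ)/4 ≤ 1 + 2 * s * Real.cos θ + s ^ 2 := by
  have h1 := abs_lt.mp hs
  have h2 := Real.neg_one_le_cos θ
  have h3 := Real.cos_le_one θ
  rcases le_or_gt 0 s with h | h
  · nlinarith
  · nlinarith

lemma base_ub (s θ : ℝ) (hs : |s| < 1/2) : 1 + 2 * s * Real.cos θ + s ^ 2 ≤ 4 := by
  have h1 := abs_lt.mp hs
  have h2 := Real.neg_one_le_cos θ
  have h3 := Real.cos_le_one θ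
  rcases le_or_gt 0 s with h | h
  · nlinarith
  · nlinarith

lemma pow_ub (s θ q : ℝ) (hq : 0 < q) (hs : |s| < 1/2) :
    (1 + 2 * s * Real.cos θ + s ^ 2) ^ (q - 1) ≤ 4 ^ (q + 1) := by
  rcases le_or_gt 1 q with h | h
  · calc (1 + 2 * s * Real.cos θ + s ^ 2) ^ (q - 1) ≤ 4 ^ (q-1) :=
        Real.rpow_le_rpow (base_nonneg s θ) (base_ub s θ hs) (by linarith)
      _ ≤ 4 ^ (q+1) := Real.rpow_le_rpow_of_exponent_le (by norm_num) (by linarith)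
  · calc (1 + 2 * s * Real.cos θ + s ^ 2) ^ (q - 1) ≤ ((1:ℝ)/4) ^ (q-1) :=
        Real.rpow_le_rpow_of_nonpos (by norm_num) (base_lb s θ hs) (by linarith)
      _ = 4 ^ (1-q) := by
          rw [show (1:ℝ)/4 = 4⁻¹ by norm_num, ← Real.rpow_neg_one 4,
            ← Real.rpow_mul (by norm_num)]
          ring_nf
      _ ≤ 4 ^ (q+1) := Real.rpow_le_rpow_of_exponent_le (by norm_num) (by linarith)

lemma F_hasDeriv (q : ℝ) (hq : 0 < q) :
    HasDerivAt (fun s : ℝ => ∫ θ in (0:ℝ)..(2*π),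
      Real.cos θ * (1 + 2 * s * Real.cos θ + s ^ 2) ^ q) (2 * q * π) 0 := by
  set F' : ℝ → ℝ → ℝ := fun s θ =>
    Real.cos θ * (q * (1 + 2 * s * Real.cos θ + s ^ 2) ^ (q - 1) * (2 * Real.cos θ + 2 * s))
    with hF'
  have key := intervalIntegral.hasDerivAt_integral_of_dominated_loc_of_deriv_le
    (μ := MeasureTheory.volume) (a := (0:ℝ)) (b := 2*π) (x₀ := (0:ℝ)) (s := Metric.ball 0 (1/2))
    (F := fun s θ => Real.cos θ * (1 + 2 * s * Real.cos θ + s ^ 2) ^ q) (F' := F')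
    (bound := fun _ => 3 * q * 4 ^ (q+1)) (Metric.ball_mem_nhds _ (by norm_num))
    ?_ ?_ ?_ ?_ ?_ ?_
  · obtain ⟨-, hd⟩ := key
    have hval : (∫ θ in (0:ℝ)..(2*π), F' 0 θ) = 2 * q * π := by
      have : ∀ θ, F' 0 θ = (2*q) * Real.cos θ ^ 2 := by
        intro θ
        simp only [hF']
        norm_num [Real.one_rpow]
        ring
      rw [intervalIntegral.integral_congr (fun θ _ => this θ),
        intervalIntegral.integral_const_mul, integral_cos_sq]
      norm_num [Real.sin_two_pi, Real.cos_two_pi]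
      try ring
    rwa [hval] at hd
  · filter_upwards with s
    exact ((continuous_cos.mul ((by fun_prop :
      Continuous fun θ : ℝ => 1 + 2 * s * Real.cos θ + s ^ 2).rpow_const
      fun _ => Or.inr hq.le))).aestronglyMeasurable
  · exact ((continuous_cos.mul ((by fun_prop :
      Continuous fun θ : ℝ => 1 + 2 * 0 * Real.cos θ + 0 ^ 2).rpow_const
      fun _ => Or.inr hq.le))).intervalIntegrable _ _
  · apply Continuous.aestronglyMeasurable
    apply continuous_cos.mul
    apply Continuous.mul
    · apply Continuous.mul continuous_const
      apply Continuous.rpow_const (by fun_prop)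
      intro θ
      left
      norm_num
    · fun_prop
  · filter_upwards with θ _ s hs
    have hs' : |s| < 1/2 := by simpa [Real.dist_eq] using hs
    have h2 := Real.neg_one_le_cos θ
    have h3 := Real.cos_le_one θ
    have habs : |Real.cos θ| ≤ 1 := Real.abs_cos_le_one θ
    have hB0 : (0:ℝ) ≤ (1 + 2 * s * Real.cos θ + s ^ 2) ^ (q - 1) :=
      Real.rpow_nonneg (base_nonneg s θ) _
    have hB := pow_ub s θ q hq hs'
    have hD : |2 * Real.cos θ + 2 * s| ≤ 3 := by
      have := abs_lt.mp hs'
      rw [abs_le]; constructor <;> nlinarith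
    simp only [hF', Real.norm_eq_abs]
    rw [abs_mul, abs_mul, abs_mul, abs_of_nonneg hq.le, abs_of_nonneg hB0]
    have e1 : q * (1 + 2 * s * Real.cos θ + s ^ 2) ^ (q - 1) * |2 * Real.cos θ + 2 * s|
        ≤ q * 4 ^ (q+1) * 3 :=
      mul_le_mul (mul_le_mul_of_nonneg_left hB hq.le) hD (abs_nonneg _)
        (mul_nonneg hq.le (Real.rpow_nonneg (by norm_num) _))
    calc |Real.cos θ| * (q * (1 + 2 * s * Real.cos θ + s ^ 2) ^ (q-1) * |2 * Real.cos θ + 2 * s|)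
        ≤ 1 * (q * 4 ^ (q+1) * 3) :=
          mul_le_mul habs e1 (mul_nonneg (mul_nonneg hq.le hB0) (abs_nonneg _)) (by norm_num)
      _ = 3 * q * 4 ^ (q+1) := by ring
  · exact intervalIntegrable_const
  · filter_upwards with θ _ s hs
    have hs' : |s| < 1/2 := by simpa [Real.dist_eq] using hs
    have hpos : 0 < 1 + 2 * s * Real.cos θ + s ^ 2 := lt_of_lt_of_le (by norm_num) (base_lb s θ hs')
    have heq : (fun x : ℝ => 1 + 2 * x * Real.cos θ + x ^ 2)
        = fun x : ℝ => 1 + 2 * Real.cos θ * x + x ^ 2 := by funext x; ring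
    have hb : HasDerivAt (fun x : ℝ => 1 + 2 * x * Real.cos θ + x ^ 2)
        (2 * Real.cos θ + 2 * s) s := by
      rw [heq]
      have h := (((hasDerivAt_id s).const_mul (2 * Real.cos θ)).const_add 1).add
        (hasDerivAt_pow 2 s)
      refine h.congr_deriv ?_
      norm_num
    have hd := (hb.rpow_const (p := q) (Or.inl (ne_of_gt hpos))).const_mul (Real.cos θ)
    refine hd.congr_deriv ?_
    simp only [hF']
    ring


open Real Filter in
theorem stmt_10 (p : ℝ) (hp : 1 < p) (α : ℝ → ℝ)
    (hα : ∀ t, α t = ∫ θ in (0 : ℝ)..(2 * π),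
        (1 + t * Real.cos θ) * (1 + 2 * t * Real.cos θ + t ^ 2) ^ ((p - 1) / 2)) :
    ContinuousOn α (Set.Ici 0) ∧ α 0 = 2 * π ∧
      Tendsto (fun t => α t / t ^ (p - 1)) atTop (nhds (π * (p + 1))) ∧
      ∃ C > 0, ∀ t : ℝ, 0 ≤ t → α t ≤ C * (1 + t ^ (p - 1)) := by
  have hq : 0 < (p - 1) / 2 := by linarith
  have hαc : Continuous α := by
    rw [funext hα]; exact alpha_cont _ hq.le
  have h0 : α 0 = 2 * π := by
    rw [hα 0]
    rw [intervalIntegral.integral_congr (g := fun _ => (1:ℝ))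
      (fun θ _ => by norm_num [Real.one_rpow])]
    simp
  have hG0 : (∫ θ in (0:ℝ)..(2*π), (1 + 2*(0:ℝ)*Real.cos θ + (0:ℝ)^2) ^ ((p-1)/2)) = 2*π := by
    rw [intervalIntegral.integral_congr (g := fun _ => (1:ℝ))
      (fun θ _ => by norm_num [Real.one_rpow])]
    simp
  have hF0 : (∫ θ in (0:ℝ)..(2*π), Real.cos θ * (1 + 2*(0:ℝ)*Real.cos θ + (0:ℝ)^2) ^ ((p-1)/2)) = 0 := by
    rw [intervalIntegral.integral_congr (g := fun θ => Real.cos θ)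
      (fun θ _ => by norm_num [Real.one_rpow])]
    simp [integral_cos]
  -- key identity
  have hkey : ∀ t : ℝ, 0 < t → α t = t ^ (p-1) *
      ((∫ θ in (0:ℝ)..(2*π), (1 + 2*(1/t)*Real.cos θ + (1/t)^2) ^ ((p-1)/2))
        + t * ∫ θ in (0:ℝ)..(2*π), Real.cos θ * (1 + 2*(1/t)*Real.cos θ + (1/t)^2) ^ ((p-1)/2)) := by
    intro t ht
    have hpow : ∀ θ : ℝ, (1 + 2*t*Real.cos θ + t^2) ^ ((p-1)/2)
        = t ^ (p-1) * (1 + 2*(1/t)*Real.cos θ + (1/t)^2) ^ ((p-1)/2) := by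
      intro θ
      have hb : 1 + 2*t*Real.cos θ + t^2 = t^2 * (1 + 2*(1/t)*Real.cos θ + (1/t)^2) := by
        field_simp; ring
      rw [hb, Real.mul_rpow (sq_nonneg t) (base_nonneg _ _)]
      congr 1
      rw [← Real.rpow_natCast t 2, ← Real.rpow_mul ht.le]
      congr 1
      push_cast
      ring
    rw [hα t]
    rw [intervalIntegral.integral_congr
      (g := fun θ => t ^ (p-1) * ((1 + 2*(1/t)*Real.cos θ + (1/t)^2) ^ ((p-1)/2)
        + t * (Real.cos θ * (1 + 2*(1/t)*Real.cos θ + (1/t)^2) ^ ((p-1)/2))))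
      (fun θ _ => by rw [hpow θ]; ring)]
    rw [intervalIntegral.integral_const_mul]
    congr 1
    rw [intervalIntegral.integral_add ((cont_pow _ _ hq.le).intervalIntegrable _ _)
      ((show Continuous fun θ : ℝ => t * (Real.cos θ * (1 + 2*(1/t)*Real.cos θ + (1/t)^2) ^ ((p-1)/2)) from
        continuous_const.mul (Real.continuous_cos.mul (cont_pow _ _ hq.le))).intervalIntegrable _ _),
      intervalIntegral.integral_const_mul]
  -- limits
  have hinv : Tendsto (fun t : ℝ => 1/t) atTop (𝓝 (0:ℝ)) := by
    simpa [one_div] using tendsto_inv_atTop_zero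
  have hGt : Tendsto (fun t : ℝ => ∫ θ in (0:ℝ)..(2*π),
      (1 + 2*(1/t)*Real.cos θ + (1/t)^2) ^ ((p-1)/2)) atTop (𝓝 (2*π)) := by
    have h := (G_cont ((p-1)/2) hq.le).tendsto 0
    rw [hG0] at h
    exact h.comp hinv
  have hFt : Tendsto (fun t : ℝ => t * ∫ θ in (0:ℝ)..(2*π),
      Real.cos θ * (1 + 2*(1/t)*Real.cos θ + (1/t)^2) ^ ((p-1)/2)) atTop (𝓝 ((p-1)*π)) := by
    have hslope := hasDerivAt_iff_tendsto_slope.mp (F_hasDeriv ((p-1)/2) hq)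
    have htend1 : Tendsto (fun t : ℝ => 1/t) atTop (𝓝[≠] (0:ℝ)) := by
      apply tendsto_nhdsWithin_of_tendsto_nhds_of_eventually_within _ hinv
      filter_upwards [eventually_gt_atTop 0] with t ht
      exact (by positivity : (0:ℝ) < 1/t).ne'
    have h2 := hslope.comp htend1
    have h3 : 2 * ((p-1)/2) * π = (p-1)*π := by ring
    rw [h3] at h2
    apply h2.congr'
    filter_upwards [eventually_gt_atTop 0] with t ht
    have h1t : (1:ℝ)/t ≠ 0 := by positivity
    simp only [Function.comp_apply, slope_def_field, hF0, sub_zero]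
    rw [one_div, div_eq_mul_inv, inv_inv]
    exact mul_comm _ _
  have hlim : Tendsto (fun t => α t / t ^ (p - 1)) atTop (𝓝 (π * (p + 1))) := by
    have hsum := hGt.add hFt
    have h3 : π * (p+1) = 2*π + (p-1)*π := by ring
    rw [h3]
    apply hsum.congr'
    filter_upwards [eventually_gt_atTop 0] with t ht
    rw [hkey t ht, mul_div_cancel_left₀ _ (ne_of_gt (Real.rpow_pos_of_pos ht _))]
  refine ⟨hαc.continuousOn, h0, hlim, ?_⟩
  -- bound
  have hKpos : 0 < π * (p+1) + 1 := by nlinarith [Real.pi_pos]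
  have hev : ∀ᶠ t : ℝ in atTop, α t / t ^ (p-1) < π * (p+1) + 1 :=
    hlim.eventually_lt_const (by linarith)
  obtain ⟨T, hT⟩ := (hev.and (eventually_gt_atTop 0)).exists_forall_of_atTop
  obtain ⟨M, hM⟩ := (isCompact_Icc (a := (0:ℝ)) (b := T)).exists_bound_of_continuousOn
    hαc.continuousOn
  refine ⟨max M (π * (p+1) + 1) + 1, by positivity, ?_⟩
  intro t ht
  have hrn : 0 ≤ t ^ (p-1) := Real.rpow_nonneg ht _
  have hC1 : π * (p+1) + 1 ≤ max M (π * (p+1) + 1) + 1 := by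
    have := le_max_right M (π * (p+1) + 1); linarith
  rcases le_or_gt t T with h | h
  · have := hM t ⟨ht, h⟩
    rw [Real.norm_eq_abs] at this
    have hMt : α t ≤ M := le_trans (le_abs_self _) this
    have := le_max_left M (π * (p+1) + 1)
    nlinarith
  · obtain ⟨hlt, htp⟩ := hT t h.le
    have htp' : 0 < t ^ (p-1) := Real.rpow_pos_of_pos htp _
    have : α t < (π * (p+1) + 1) * t ^ (p-1) := (div_lt_iff₀ htp').mp hlt
    nlinarith
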